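/- If E[X_1^r] < ∞ for some r > 1, then for each γ > 0 and q > 0 there exist positive constants v and C, not depending on x or n, such that for all x ≥ γn and all integers n ≥ 1, P[S_n − nμ > x] ≤ n·P[X_1 − μ > vx] + C·x^{−q}. -/

import Mathlib

open MeasureTheory ProbabilityTheory Filter Topology

private lemma exp_quad {u c : ℝ} (hu : 0 ≤ u) (huc : u ≤ c) :
    Real.exp u ≤ 1 + u + u ^ 2 * Real.exp c := by
  have h2 := Real.add_one_le_exp (-u)
  rw [Real.exp_neg] at h2
  have h3 := mul_le_mul_of_nonneg_right h2 (Real.exp_pos u).le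
  rw [inv_mul_cancel₀ (Real.exp_pos u).ne'] at h3
  have h1 : Real.exp u - 1 ≤ u * Real.exp u := by nlinarith
  have h4 : Real.exp u ≤ Real.exp c := Real.exp_le_exp.mpr huc
  nlinarith [mul_le_mul_of_nonneg_left h1 hu, mul_le_mul_of_nonneg_left h4 (mul_nonneg hu hu)]

set_option maxHeartbeats 2000000 in
/-- Lemma 2.1 (large-deviation bound of Tang): if `E[X₁^r] < ∞` for some `r > 1`, then for
each `γ > 0` and `q > 0` there are constants `v, C > 0` such that for all `n ≥ 1` and
`x ≥ γ n`, `P[Sₙ - nμ > x] ≤ n P[X₁ - μ > v x] + C x^{-q}`. -/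
theorem large_deviation_bound_Tang
    {Ω : Type*} [MeasureSpace Ω] [IsProbabilityMeasure (ℙ : Measure Ω)]
    (X : ℕ → Ω → ℝ) (hX : ∀ i, Measurable (X i))
    (hiid : iIndepFun X ℙ)
    (hid : ∀ i, IdentDistrib (X i) (X 0) ℙ ℙ)
    (hpos : ∀ i, 0 ≤ᵐ[ℙ] X i)
    (hint : Integrable (X 0) ℙ)
    (μ : ℝ) (hμ : μ = ∫ ω, X 0 ω ∂ℙ)
    (r : ℝ) (hr : 1 < r)
    (hmom : Integrable (fun ω => |X 0 ω| ^ r) ℙ)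
    (γ q : ℝ) (hγ : 0 < γ) (hq : 0 < q) :
    ∃ v C : ℝ, 0 < v ∧ 0 < C ∧ ∀ n : ℕ, 1 ≤ n → ∀ x : ℝ, γ * n ≤ x →
      (ℙ {ω | x < (∑ i ∈ Finset.range n, X i ω) - n * μ}).toReal
        ≤ n * (ℙ {ω | v * x < X 0 ω - μ}).toReal + C * x ^ (-q) := by
  classical
  have hprob : ∀ u : Set Ω, (ℙ u).toReal ≤ 1 := fun u => by
    simpa using ENNReal.toReal_mono ENNReal.one_ne_top (prob_le_one (μ := ℙ) (s := u))
  have hμ0 : 0 ≤ μ := by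
    rw [hμ]; exact integral_nonneg_of_ae (hpos 0)
  obtain ⟨s, hs_def⟩ : ∃ z : ℝ, z = min r 2 := ⟨_, rfl⟩
  have hs1 : 1 < s := by rw [hs_def]; exact lt_min hr one_lt_two
  have hs2 : s ≤ 2 := by rw [hs_def]; exact min_le_right r 2
  have hsr : s ≤ r := by rw [hs_def]; exact min_le_left r 2
  obtain ⟨δ, hδ_def⟩ : ∃ z : ℝ, z = (s - 1) / 2 := ⟨_, rfl⟩
  have hδ0 : 0 < δ := by rw [hδ_def]; linarith only [hs1]
  have hMint : Integrable (fun ω => |X 0 ω| ^ r + 1) ℙ := hmom.add (integrable_const 1)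
  obtain ⟨M, hM_def⟩ : ∃ z : ℝ, z = (∫ ω, |X 0 ω| ^ r ∂ℙ) + 1 := ⟨_, rfl⟩
  have hM1 : 1 ≤ M := by
    have h0 : 0 ≤ ∫ ω, |X 0 ω| ^ r ∂ℙ :=
      integral_nonneg fun ω => Real.rpow_nonneg (abs_nonneg _) r
    rw [hM_def]; linarith only [h0]
  have hM0 : (0:ℝ) < M := lt_of_lt_of_le one_pos hM1
  obtain ⟨v, hv_def⟩ : ∃ z : ℝ, z = δ / (4 * q) := ⟨_, rfl⟩
  have hv0 : 0 < v := by rw [hv_def]; exact div_pos hδ0 (by linarith only [hq])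
  obtain ⟨x₀, hx₀_def⟩ : ∃ z : ℝ, z = γ + 1 + 4 * q * μ / δ := ⟨_, rfl⟩
  have hqμδ : 0 ≤ 4 * q * μ / δ :=
    div_nonneg (mul_nonneg (by linarith only [hq] : (0:ℝ) ≤ 4 * q) hμ0) hδ0.le
  have hx₀1 : 1 ≤ x₀ := by rw [hx₀_def]; linarith only [hγ, hqμδ]
  have hx₀0 : 0 < x₀ := by linarith only [hx₀1]
  have hx₀μ : 4 * q * μ / δ ≤ x₀ := by rw [hx₀_def]; linarith only [hγ]
  obtain ⟨w, hw_def⟩ : ∃ z : ℝ, z = v + μ / x₀ := ⟨_, rfl⟩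
  have hw0 : 0 < w := by
    rw [hw_def]; exact add_pos_of_pos_of_nonneg hv0 (div_nonneg hμ0 hx₀0.le)
  have hqw : q * w ≤ δ := by
    have h1 : q * v = δ / 4 := by rw [hv_def]; field_simp
    have h2 : q * (μ / x₀) ≤ δ / 4 := by
      have h3 : 4 * q * μ ≤ x₀ * δ := (div_le_iff₀ hδ0).mp hx₀μ
      rw [mul_div_assoc', div_le_div_iff₀ hx₀0 (by norm_num : (0:ℝ) < 4)]
      linarith only [h3]
    have h4 : q * w = q * v + q * (μ / x₀) := by rw [hw_def]; ring
    linarith only [h1, h2, h4, hδ0]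
  obtain ⟨K, hK_def⟩ : ∃ z : ℝ, z = M * q ^ 2 * (1 + w) / γ := ⟨_, rfl⟩
  have hK0 : 0 ≤ K := by
    rw [hK_def]
    exact div_nonneg (mul_nonneg (mul_nonneg hM0.le (sq_nonneg q)) (by linarith only [hw0])) hγ.le
  obtain ⟨A, hA_def⟩ : ∃ z : ℝ, z = 16 * K / δ ^ 2 := ⟨_, rfl⟩
  have hA0 : 0 ≤ A := by
    rw [hA_def]; exact div_nonneg (by linarith only [hK0]) (sq_nonneg δ)
  refine ⟨v, x₀ ^ q + Real.exp A, hv0,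
    add_pos_of_nonneg_of_pos (Real.rpow_nonneg hx₀0.le q) (Real.exp_pos A),
    fun n hn x hx => ?_⟩
  have hn1 : (1:ℝ) ≤ n := by exact_mod_cast hn
  have hγn : γ * 1 ≤ γ * n := mul_le_mul_of_nonneg_left hn1 hγ.le
  have hγx : γ ≤ x := le_trans (by linarith only [hγn]) hx
  have hx0 : 0 < x := lt_of_lt_of_le hγ hγx
  have hxq0 : 0 ≤ x ^ (-q) := Real.rpow_nonneg hx0.le _
  have hP0 : 0 ≤ (ℙ {ω | v * x < X 0 ω - μ}).toReal := ENNReal.toReal_nonneg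
  by_cases hcase : x < x₀
  · -- small x : trivial bound, since C x^(-q) ≥ x₀^q x^(-q) ≥ 1
    have h1 : (1:ℝ) ≤ x₀ ^ q * x ^ (-q) := by
      have e1 : x₀ ^ q * x ^ (-q) = (x₀ / x) ^ q := by
        rw [Real.div_rpow hx₀0.le hx0.le, Real.rpow_neg hx0.le, div_eq_mul_inv]
      rw [e1]
      have h2 : 1 ≤ x₀ / x := (one_le_div hx0).mpr hcase.le
      calc (1:ℝ) = 1 ^ q := (Real.one_rpow q).symm
        _ ≤ (x₀ / x) ^ q := Real.rpow_le_rpow zero_le_one h2 hq.le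
    have h2 := hprob {ω | x < (∑ i ∈ Finset.range n, X i ω) - n * μ}
    have h3 : 0 ≤ (n:ℝ) * (ℙ {ω | v * x < X 0 ω - μ}).toReal :=
      mul_nonneg (by positivity) hP0
    have h4 : (x₀ ^ q + Real.exp A) * x ^ (-q) = x₀ ^ q * x ^ (-q) + Real.exp A * x ^ (-q) :=
      add_mul _ _ _
    linarith only [h1, h2, h3, h4, mul_nonneg (Real.exp_pos A).le hxq0]
  · push_neg at hcase  -- x₀ ≤ x
    have hx1 : (1:ℝ) ≤ x := le_trans hx₀1 hcase
    obtain ⟨t, ht_def⟩ : ∃ z : ℝ, z = μ + v * x := ⟨_, rfl⟩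
    have ht0 : 0 ≤ t := by rw [ht_def]; linarith only [hμ0, mul_nonneg hv0.le hx0.le]
    obtain ⟨L, hL_def⟩ : ∃ z : ℝ, z = Real.log x := ⟨_, rfl⟩
    have hL0 : 0 ≤ L := by rw [hL_def]; exact Real.log_nonneg hx1
    obtain ⟨h, hh_def⟩ : ∃ z : ℝ, z = q * L / x := ⟨_, rfl⟩
    have hh0 : 0 ≤ h := by
      rw [hh_def]; exact div_nonneg (mul_nonneg hq.le hL0) hx0.le
    set Y : ℕ → Ω → ℝ := fun i ω => min (X i ω) t with hY_def
    have hYm : ∀ i, Measurable (Y i) := fun i => (hX i).min measurable_const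
    have hYle : ∀ i ω, Y i ω ≤ t := fun i ω => min_le_right _ _
    have hYleX : ∀ i ω, Y i ω ≤ X i ω := fun i ω => min_le_left _ _
    -- event inclusion
    have hsub : {ω | x < (∑ i ∈ Finset.range n, X i ω) - n * μ} ⊆
        (⋃ i ∈ Finset.range n, {ω | t < X i ω}) ∪
          {ω | (n:ℝ) * μ + x ≤ (∑ i ∈ Finset.range n, Y i) ω} := by
      intro ω hω
      simp only [Set.mem_setOf_eq] at hω
      by_cases hex : ∃ i ∈ Finset.range n, t < X i ω
      · obtain ⟨i, hi, hti⟩ := hex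
        exact Or.inl (Set.mem_biUnion hi hti)
      · push_neg at hex
        refine Or.inr ?_
        have hYX : ∀ i ∈ Finset.range n, Y i ω = X i ω := fun i hi => min_eq_left (hex i hi)
        simp only [Set.mem_setOf_eq, Finset.sum_apply]
        rw [Finset.sum_congr rfl hYX]
        linarith only [hω]
    have hPsplit : (ℙ {ω | x < (∑ i ∈ Finset.range n, X i ω) - n * μ}).toReal ≤
        (ℙ (⋃ i ∈ Finset.range n, {ω | t < X i ω})).toReal +
        (ℙ {ω | (n:ℝ) * μ + x ≤ (∑ i ∈ Finset.range n, Y i) ω}).toReal := by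
      rw [← ENNReal.toReal_add (measure_ne_top _ _) (measure_ne_top _ _)]
      exact ENNReal.toReal_mono
        (ENNReal.add_ne_top.mpr ⟨measure_ne_top _ _, measure_ne_top _ _⟩)
        ((measure_mono hsub).trans (measure_union_le _ _))
    -- union bound
    have hU : (ℙ (⋃ i ∈ Finset.range n, {ω | t < X i ω})).toReal ≤
        (n:ℝ) * (ℙ {ω | v * x < X 0 ω - μ}).toReal := by
      have heq : {ω | v * x < X 0 ω - μ} = X 0 ⁻¹' Set.Ioi t := by
        ext ω
        simp only [Set.mem_setOf_eq, Set.mem_preimage, Set.mem_Ioi, ht_def]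
        constructor <;> intro hh <;> linarith only [hh]
      have h1 : ℙ (⋃ i ∈ Finset.range n, {ω | t < X i ω}) ≤
          ∑ i ∈ Finset.range n, ℙ {ω | t < X i ω} := measure_biUnion_finset_le _ _
      have h2 : ∀ i ∈ Finset.range n, ℙ {ω | t < X i ω} = ℙ (X 0 ⁻¹' Set.Ioi t) := by
        intro i _
        have he : {ω | t < X i ω} = X i ⁻¹' Set.Ioi t := rfl
        rw [he]
        exact (hid i).measure_mem_eq measurableSet_Ioi
      rw [Finset.sum_congr rfl h2, Finset.sum_const, Finset.card_range, nsmul_eq_mul] at h1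
      calc (ℙ (⋃ i ∈ Finset.range n, {ω | t < X i ω})).toReal
          ≤ ((n : ENNReal) * ℙ (X 0 ⁻¹' Set.Ioi t)).toReal :=
            ENNReal.toReal_mono
              (ENNReal.mul_ne_top (ENNReal.natCast_ne_top n) (measure_ne_top _ _)) h1
        _ = (n:ℝ) * (ℙ {ω | v * x < X 0 ω - μ}).toReal := by
            rw [ENNReal.toReal_mul, ENNReal.toReal_natCast, heq]
    -- Chernoff bound for the truncated sum
    have hSm : Measurable (∑ i ∈ Finset.range n, Y i) := by
      have he : (∑ i ∈ Finset.range n, Y i) = fun ω => ∑ i ∈ Finset.range n, Y i ω := by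
        funext ω
        exact Finset.sum_apply ω (Finset.range n) Y
      rw [he]
      exact Finset.measurable_sum _ fun i _ => hYm i
    have hint_exp : Integrable (fun ω => Real.exp (h * (∑ i ∈ Finset.range n, Y i) ω)) ℙ := by
      refine (integrable_const (Real.exp (h * (n * t)))).mono'
        ((hSm.const_mul h).exp.aestronglyMeasurable) (ae_of_all _ fun ω => ?_)
      rw [Real.norm_eq_abs, Real.abs_exp]
      refine Real.exp_le_exp.mpr (mul_le_mul_of_nonneg_left ?_ hh0)
      rw [Finset.sum_apply]
      calc ∑ i ∈ Finset.range n, Y i ω ≤ ∑ i ∈ Finset.range n, t :=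
            Finset.sum_le_sum fun i _ => hYle i ω
        _ = n * t := by rw [Finset.sum_const, Finset.card_range, nsmul_eq_mul]
    have hcher := measure_ge_le_exp_mul_mgf (μ := ℙ) (X := ∑ i ∈ Finset.range n, Y i)
      ((n:ℝ) * μ + x) hh0 hint_exp
    have hiidY : iIndepFun Y ℙ :=
      hiid.comp (fun _ (y : ℝ) => min y t) (fun _ => measurable_id.min measurable_const)
    have hmgf_sum := hiidY.mgf_sum (t := h) hYm (Finset.range n)
    have hmgf_id : ∀ i, mgf (Y i) ℙ h = mgf (Y 0) ℙ h := by
      intro i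
      have h1 : IdentDistrib (Y i) (Y 0) ℙ ℙ :=
        (hid i).comp (measurable_id.min measurable_const)
      simpa [mgf, Function.comp] using
        (h1.comp ((measurable_id.const_mul h).exp)).integral_eq
    have hprod : ∏ i ∈ Finset.range n, mgf (Y i) ℙ h = mgf (Y 0) ℙ h ^ n := by
      rw [Finset.prod_congr rfl fun i _ => hmgf_id i, Finset.prod_const, Finset.card_range]
    -- moment bounds for Y 0
    have hY0le : ∀ᵐ ω ∂ℙ, 0 ≤ Y 0 ω := (hpos 0).mono fun ω hω => le_min hω ht0
    have hYint : Integrable (Y 0) ℙ := by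
      refine hint.mono' (hYm 0).aestronglyMeasurable ((hpos 0).mono fun ω hω => ?_)
      rw [Real.norm_eq_abs, abs_of_nonneg (le_min hω ht0)]
      exact min_le_left _ _
    have hEY : ∫ ω, Y 0 ω ∂ℙ ≤ μ := by
      rw [hμ]; exact integral_mono hYint hint fun ω => min_le_left _ _
    have hXsm : Measurable fun ω => X 0 ω ^ s :=
      (Real.continuous_rpow_const (by linarith only [hs1])).measurable.comp (hX 0)
    have hptw : ∀ᵐ ω ∂ℙ, X 0 ω ^ s ≤ |X 0 ω| ^ r + 1 := by
      filter_upwards [hpos 0] with ω hω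
      rcases le_total (X 0 ω) 1 with h1 | h1
      · have h2 : X 0 ω ^ s ≤ 1 := Real.rpow_le_one hω h1 (by linarith only [hs1])
        have h3 : (0:ℝ) ≤ |X 0 ω| ^ r := Real.rpow_nonneg (abs_nonneg _) r
        linarith only [h2, h3]
      · have h2 : X 0 ω ^ s ≤ X 0 ω ^ r := Real.rpow_le_rpow_of_exponent_le h1 hsr
        rw [abs_of_nonneg hω]
        linarith only [h2]
    have hXs_int : Integrable (fun ω => X 0 ω ^ s) ℙ := by
      refine hMint.mono' hXsm.aestronglyMeasurable ?_
      filter_upwards [hpos 0, hptw] with ω hω hptω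
      rw [Real.norm_eq_abs, abs_of_nonneg (Real.rpow_nonneg hω s)]
      exact hptω
    have hXs_le : ∫ ω, X 0 ω ^ s ∂ℙ ≤ M := by
      rw [hM_def]
      calc ∫ ω, X 0 ω ^ s ∂ℙ ≤ ∫ ω, (|X 0 ω| ^ r + 1) ∂ℙ :=
            integral_mono_ae hXs_int hMint hptw
        _ = (∫ ω, |X 0 ω| ^ r ∂ℙ) + 1 := by
            rw [integral_add hmom (integrable_const 1), integral_const]
            simp
    have hYsq_int : Integrable (fun ω => Y 0 ω ^ 2) ℙ := by
      refine (integrable_const (t ^ 2)).mono'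
        ((hYm 0).pow_const 2).aestronglyMeasurable ?_
      filter_upwards [hY0le] with ω hω
      rw [Real.norm_eq_abs, abs_of_nonneg (by positivity)]
      exact pow_le_pow_left₀ hω (hYle 0 ω) 2
    have hYsq_le : ∫ ω, Y 0 ω ^ 2 ∂ℙ ≤ t ^ (2 - s) * M := by
      have hpt : ∀ᵐ ω ∂ℙ, Y 0 ω ^ 2 ≤ t ^ (2 - s) * X 0 ω ^ s := by
        filter_upwards [hpos 0] with ω hω
        have hy0 : 0 ≤ Y 0 ω := le_min hω ht0
        rcases eq_or_lt_of_le hy0 with hy | hy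
        · rw [← hy]
          have hnn : (0:ℝ) ≤ t ^ (2 - s) * X 0 ω ^ s :=
            mul_nonneg (Real.rpow_nonneg ht0 _) (Real.rpow_nonneg hω _)
          simpa using hnn
        · have e1 : Y 0 ω ^ (2:ℕ) = Y 0 ω ^ ((2:ℝ) - s) * Y 0 ω ^ s := by
            rw [← Real.rpow_add hy, ← Real.rpow_natCast (Y 0 ω) 2]
            congr 1
            push_cast
            ring
          rw [e1]
          exact mul_le_mul (Real.rpow_le_rpow hy0 (hYle 0 ω) (by linarith only [hs2]))
            (Real.rpow_le_rpow hy0 (hYleX 0 ω) (by linarith only [hs1]))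
            (Real.rpow_nonneg hy0 s) (Real.rpow_nonneg ht0 _)
      calc ∫ ω, Y 0 ω ^ 2 ∂ℙ ≤ ∫ ω, t ^ (2 - s) * X 0 ω ^ s ∂ℙ :=
            integral_mono_ae hYsq_int (hXs_int.const_mul _) hpt
        _ = t ^ (2 - s) * ∫ ω, X 0 ω ^ s ∂ℙ := integral_const_mul _ _
        _ ≤ t ^ (2 - s) * M := mul_le_mul_of_nonneg_left hXs_le (Real.rpow_nonneg ht0 _)
    obtain ⟨D, hD_def⟩ : ∃ z : ℝ, z = h ^ 2 * Real.exp (h * t) * (t ^ (2 - s) * M) :=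
      ⟨_, rfl⟩
    have hD0 : 0 ≤ D := by
      rw [hD_def]
      exact mul_nonneg (mul_nonneg (sq_nonneg h) (Real.exp_pos _).le)
        (mul_nonneg (Real.rpow_nonneg ht0 _) hM0.le)
    have hmgfY : mgf (Y 0) ℙ h ≤ Real.exp (h * μ + D) := by
      have hpt : ∀ᵐ ω ∂ℙ, Real.exp (h * Y 0 ω) ≤
          1 + h * Y 0 ω + h ^ 2 * Real.exp (h * t) * Y 0 ω ^ 2 := by
        filter_upwards [hY0le] with ω hω
        have h1 := exp_quad (mul_nonneg hh0 hω) (mul_le_mul_of_nonneg_left (hYle 0 ω) hh0)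
        calc Real.exp (h * Y 0 ω) ≤ 1 + h * Y 0 ω + (h * Y 0 ω) ^ 2 * Real.exp (h * t) := h1
          _ = 1 + h * Y 0 ω + h ^ 2 * Real.exp (h * t) * Y 0 ω ^ 2 := by ring
      have hint_rhs : Integrable
          (fun ω => 1 + h * Y 0 ω + h ^ 2 * Real.exp (h * t) * Y 0 ω ^ 2) ℙ :=
        ((integrable_const 1).add (hYint.const_mul h)).add (hYsq_int.const_mul _)
      have hint_lhs : Integrable (fun ω => Real.exp (h * Y 0 ω)) ℙ := by
        refine (integrable_const (Real.exp (h * t))).mono'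
          ((hYm 0).const_mul h).exp.aestronglyMeasurable (ae_of_all _ fun ω => ?_)
        rw [Real.norm_eq_abs, Real.abs_exp]
        exact Real.exp_le_exp.mpr (mul_le_mul_of_nonneg_left (hYle 0 ω) hh0)
      calc mgf (Y 0) ℙ h = ∫ ω, Real.exp (h * Y 0 ω) ∂ℙ := rfl
        _ ≤ ∫ ω, (1 + h * Y 0 ω + h ^ 2 * Real.exp (h * t) * Y 0 ω ^ 2) ∂ℙ :=
            integral_mono_ae hint_lhs hint_rhs hpt
        _ = 1 + h * ∫ ω, Y 0 ω ∂ℙ + h ^ 2 * Real.exp (h * t) * ∫ ω, Y 0 ω ^ 2 ∂ℙ := by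
            have hi0 : Integrable (fun ω => h * Y 0 ω) ℙ := hYint.const_mul h
            have hi1 : Integrable (fun ω => 1 + h * Y 0 ω) ℙ :=
              (integrable_const 1).add hi0
            have hi2 : Integrable (fun ω => h ^ 2 * Real.exp (h * t) * Y 0 ω ^ 2) ℙ :=
              hYsq_int.const_mul _
            rw [integral_add hi1 hi2, integral_add (integrable_const 1) hi0, integral_const,
              integral_const_mul, integral_const_mul]
            simp
        _ ≤ 1 + h * μ + h ^ 2 * Real.exp (h * t) * (t ^ (2 - s) * M) := by
            have e1 := mul_le_mul_of_nonneg_left hEY hh0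
            have e2 := mul_le_mul_of_nonneg_left hYsq_le
              (mul_nonneg (sq_nonneg h) (Real.exp_pos (h * t)).le)
            linarith only [e1, e2]
        _ = (h * μ + D) + 1 := by rw [hD_def]; ring
        _ ≤ Real.exp (h * μ + D) := Real.add_one_le_exp _
    have hmgfn : mgf (∑ i ∈ Finset.range n, Y i) ℙ h ≤
        Real.exp ((n:ℝ) * (h * μ + D)) := by
      rw [hmgf_sum, hprod]
      calc mgf (Y 0) ℙ h ^ n ≤ Real.exp (h * μ + D) ^ n :=
            pow_le_pow_left₀ mgf_nonneg hmgfY n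
        _ = Real.exp ((n:ℝ) * (h * μ + D)) := by rw [← Real.exp_nat_mul]
    -- analytic bound on n * D
    have hnD : (n:ℝ) * D ≤ A := by
      have hn_le : (n:ℝ) ≤ x / γ := (le_div_iff₀ hγ).mpr (by linarith only [hx])
      have htw : t ≤ w * x := by
        have h1 : μ / x₀ * x₀ ≤ μ / x₀ * x :=
          mul_le_mul_of_nonneg_left hcase (div_nonneg hμ0 hx₀0.le)
        rw [div_mul_cancel₀ μ hx₀0.ne'] at h1
        rw [ht_def, hw_def]
        linarith only [h1]
      have hht : h * t ≤ δ * L := by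
        have h1 : h * t ≤ h * (w * x) := mul_le_mul_of_nonneg_left htw hh0
        have h2 : h * (w * x) = q * w * L := by rw [hh_def]; field_simp
        have h3 : q * w * L ≤ δ * L := mul_le_mul_of_nonneg_right hqw hL0
        linarith only [h1, h2, h3]
      have hexp_ht : Real.exp (h * t) ≤ x ^ δ := by
        rw [Real.rpow_def_of_pos hx0]
        exact Real.exp_le_exp.mpr (by rw [← hL_def]; linarith only [hht])
      have ht2s : t ^ (2 - s) ≤ (1 + w) * x ^ (2 - s) := by
        have h1 : t ^ (2 - s) ≤ (w * x) ^ (2 - s) :=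
          Real.rpow_le_rpow ht0 htw (by linarith only [hs2])
        have h2 : (w * x) ^ (2 - s) = w ^ (2 - s) * x ^ (2 - s) :=
          Real.mul_rpow hw0.le hx0.le
        have h3 : w ^ (2 - s) ≤ 1 + w := by
          rcases le_total w 1 with hw1 | hw1
          · have h4 := Real.rpow_le_one (z := 2 - s) hw0.le hw1 (by linarith only [hs2] : (0:ℝ) ≤ 2 - s)
            linarith only [h4, hw0.le]
          · have h4 : w ^ (2 - s) ≤ w ^ (1:ℝ) :=
              Real.rpow_le_rpow_of_exponent_le hw1 (by linarith only [hs1])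
            rw [Real.rpow_one] at h4
            linarith only [h4, hw1]
        have hx2s : 0 ≤ x ^ (2 - s) := Real.rpow_nonneg hx0.le _
        calc t ^ (2 - s) ≤ (w * x) ^ (2 - s) := h1
          _ = w ^ (2 - s) * x ^ (2 - s) := h2
          _ ≤ (1 + w) * x ^ (2 - s) := mul_le_mul_of_nonneg_right h3 hx2s
      have step1 : (n:ℝ) * D ≤
          (x / γ) * (h ^ 2 * x ^ δ * ((1 + w) * x ^ (2 - s) * M)) := by
        rw [hD_def]
        have hb1 : h ^ 2 * Real.exp (h * t) * (t ^ (2 - s) * M) ≤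
            h ^ 2 * x ^ δ * ((1 + w) * x ^ (2 - s) * M) := by
          refine mul_le_mul (mul_le_mul_of_nonneg_left hexp_ht (sq_nonneg h))
            (mul_le_mul_of_nonneg_right ht2s hM0.le)
            (mul_nonneg (Real.rpow_nonneg ht0 _) hM0.le) ?_
          exact mul_nonneg (sq_nonneg h) (Real.rpow_nonneg hx0.le _)
        refine mul_le_mul hn_le hb1 ?_ (div_nonneg hx0.le hγ.le)
        exact mul_nonneg (mul_nonneg (sq_nonneg h) (Real.exp_pos _).le)
          (mul_nonneg (Real.rpow_nonneg ht0 _) hM0.le)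
      have e1 : x ^ δ * x ^ (2 - s) = x ^ (-δ) * x := by
        calc x ^ δ * x ^ (2 - s) = x ^ (δ + (2 - s)) := (Real.rpow_add hx0 _ _).symm
          _ = x ^ (-δ + 1) := by congr 1; rw [hδ_def]; ring
          _ = x ^ (-δ) * x ^ (1:ℝ) := Real.rpow_add hx0 _ _
          _ = x ^ (-δ) * x := by rw [Real.rpow_one]
      have step2 : (x / γ) * (h ^ 2 * x ^ δ * ((1 + w) * x ^ (2 - s) * M)) =
          K * (L ^ 2 * x ^ (-δ)) := by
        calc (x / γ) * (h ^ 2 * x ^ δ * ((1 + w) * x ^ (2 - s) * M))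
            = (q ^ 2 * (1 + w) * M / γ) * L ^ 2 * (x ^ δ * x ^ (2 - s)) * (x / x ^ 2) := by
              rw [hh_def]; ring
          _ = (q ^ 2 * (1 + w) * M / γ) * L ^ 2 * (x ^ (-δ) * x) * (x / x ^ 2) := by
              rw [e1]
          _ = K * (L ^ 2 * x ^ (-δ)) := by
              rw [hK_def]; field_simp
      have hL_le : L ≤ 4 / δ * x ^ (δ / 4) := by
        have h1 : Real.log (x ^ (δ / 4)) = δ / 4 * L := by
          rw [Real.log_rpow hx0, hL_def]
        have h2 : Real.log (x ^ (δ / 4)) ≤ x ^ (δ / 4) :=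
          (Real.log_le_sub_one_of_pos (Real.rpow_pos_of_pos hx0 _)).trans (by linarith only [])
        rw [h1] at h2
        have h3 : δ * L ≤ 4 * x ^ (δ / 4) := by linarith only [h2]
        rw [div_mul_eq_mul_div, le_div_iff₀ hδ0]
        linarith only [h3]
      have hLsq : L ^ 2 * x ^ (-δ) ≤ 16 / δ ^ 2 := by
        have h1 : L ^ 2 ≤ (4 / δ) ^ 2 * (x ^ (δ / 4)) ^ 2 := by
          have h2 := pow_le_pow_left₀ hL0 hL_le 2
          rwa [mul_pow] at h2
        have h2 : (x ^ (δ / 4)) ^ (2:ℕ) = x ^ (δ / 2) := by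
          rw [← Real.rpow_natCast (x ^ (δ / 4)) 2, ← Real.rpow_mul hx0.le]
          congr 1
          push_cast
          ring
        have h4 : x ^ (δ / 2) * x ^ (-δ) = x ^ (-(δ / 2)) := by
          rw [← Real.rpow_add hx0]; congr 1; ring
        have h5 : x ^ (-(δ / 2)) ≤ 1 :=
          Real.rpow_le_one_of_one_le_of_nonpos hx1 (by linarith only [hδ0])
        calc L ^ 2 * x ^ (-δ) ≤ ((4 / δ) ^ 2 * x ^ (δ / 2)) * x ^ (-δ) := by
              refine mul_le_mul_of_nonneg_right ?_ (Real.rpow_nonneg hx0.le _)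
              rw [← h2]; exact h1
          _ = (4 / δ) ^ 2 * (x ^ (δ / 2) * x ^ (-δ)) := by ring
          _ = (4 / δ) ^ 2 * x ^ (-(δ / 2)) := by rw [h4]
          _ ≤ (4 / δ) ^ 2 * 1 := mul_le_mul_of_nonneg_left h5 (by positivity)
          _ = 16 / δ ^ 2 := by rw [div_pow]; norm_num
      calc (n:ℝ) * D ≤ K * (L ^ 2 * x ^ (-δ)) := step1.trans_eq step2
        _ ≤ K * (16 / δ ^ 2) := mul_le_mul_of_nonneg_left hLsq hK0
        _ = A := by rw [hA_def]; ring
    -- put the Chernoff pieces together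
    have hV : (ℙ {ω | (n:ℝ) * μ + x ≤ (∑ i ∈ Finset.range n, Y i) ω}).toReal ≤
        Real.exp A * x ^ (-q) := by
      have hexpx : Real.exp (-(h * x)) = x ^ (-q) := by
        rw [Real.rpow_def_of_pos hx0]
        congr 1
        rw [hh_def, ← hL_def]
        field_simp
      calc (ℙ {ω | (n:ℝ) * μ + x ≤ (∑ i ∈ Finset.range n, Y i) ω}).toReal
          ≤ Real.exp (-h * ((n:ℝ) * μ + x)) * mgf (∑ i ∈ Finset.range n, Y i) ℙ h := hcher
        _ ≤ Real.exp (-h * ((n:ℝ) * μ + x)) * Real.exp ((n:ℝ) * (h * μ + D)) :=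
            mul_le_mul_of_nonneg_left hmgfn (Real.exp_pos _).le
        _ = Real.exp ((n:ℝ) * D - h * x) := by rw [← Real.exp_add]; congr 1; ring
        _ ≤ Real.exp (A - h * x) := Real.exp_le_exp.mpr (by linarith only [hnD])
        _ = Real.exp A * Real.exp (-(h * x)) := by rw [← Real.exp_add, sub_eq_add_neg]
        _ = Real.exp A * x ^ (-q) := by rw [hexpx]
    calc (ℙ {ω | x < (∑ i ∈ Finset.range n, X i ω) - n * μ}).toReal
        ≤ (ℙ (⋃ i ∈ Finset.range n, {ω | t < X i ω})).toReal +
          (ℙ {ω | (n:ℝ) * μ + x ≤ (∑ i ∈ Finset.range n, Y i) ω}).toReal := hPsplit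
      _ ≤ (n:ℝ) * (ℙ {ω | v * x < X 0 ω - μ}).toReal + Real.exp A * x ^ (-q) :=
          add_le_add hU hV
      _ ≤ (n:ℝ) * (ℙ {ω | v * x < X 0 ω - μ}).toReal + (x₀ ^ q + Real.exp A) * x ^ (-q) := by
          have h1 : 0 ≤ x₀ ^ q * x ^ (-q) :=
            mul_nonneg (Real.rpow_nonneg hx₀0.le _) hxq0
          have h4 : (x₀ ^ q + Real.exp A) * x ^ (-q) =
              x₀ ^ q * x ^ (-q) + Real.exp A * x ^ (-q) := add_mul _ _ _
          linarith only [h1, h4, mul_nonneg (Real.exp_pos A).le hxq0]
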